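/- Let λ₁,...,λₙ > 0 and let Γ be any lattice of the oscillator group Osc_n(λ₁,...,λₙ). Then there exists a closed spacelike geodesic in the quotient: there exist X = (d, (b₁,c₁,...,bₙ,cₙ), a) with Q(X) = 2ad + Σ_k (b_k²+c_k²)/λ_k > 0 and s > 0 such that γ_X(s) ∈ Γ. -/

import Mathlib

open Real

noncomputable section

/-- rotation by angle `θ` acting on `ℝ × ℝ` -/
def rot (θ : ℝ) (p : ℝ × ℝ) : ℝ × ℝ :=
  (Real.cos θ * p.1 - Real.sin θ * p.2, Real.sin θ * p.1 + Real.cos θ * p.2)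

/-- the matrix `[[0,1],[-1,0]]` acting on `ℝ × ℝ` -/
def Jpair (p : ℝ × ℝ) : ℝ × ℝ := (p.2, -p.1)

/-- euclidean inner product on `ℝ × ℝ` -/
def dot2 (p q : ℝ × ℝ) : ℝ := p.1 * q.1 + p.2 * q.2

/-- underlying set `ℝ × ℝ^{2n} × ℝ` of the oscillator group, where the middle
factor `ℝ^{2n}` is recorded as `n` pairs `(x_i, y_i)`. -/
abbrev OscG (n : ℕ) := ℝ × (Fin n → ℝ × ℝ) × ℝ

/-- multiplication of the oscillator group `Osc_n(λ₁,…,λₙ)`: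
`(z₁,v₁,t₁)·(z₂,v₂,t₂) = (z₁+z₂+½ v₁ᵀ J R(t₁) v₂, v₁ + R(t₁)v₂, t₁+t₂)`,
where `R(t)` rotates the `i`-th pair by the angle `λ_i t`. -/
def oscMul {n : ℕ} (lam : Fin n → ℝ) (g h : OscG n) : OscG n :=
  (g.1 + h.1 + (1/2) * ∑ i, dot2 (g.2.1 i) (Jpair (rot (lam i * g.2.2) (h.2.1 i))),
   fun i => g.2.1 i + rot (lam i * g.2.2) (h.2.1 i),
   g.2.2 + h.2.2)

/-- identity element of the oscillator group -/
def oscOne (n : ℕ) : OscG n := (0, fun _ => (0, 0), 0)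

/-- inverse in the oscillator group: `(z,v,t)⁻¹ = (-z, -R(-t)v, -t)` -/
def oscInv {n : ℕ} (lam : Fin n → ℝ) (g : OscG n) : OscG n :=
  (-g.1, fun i => -(rot (lam i * (-g.2.2)) (g.2.1 i)), -g.2.2)

/-- `Γ` is a lattice of the oscillator group: a discrete subgroup with compact
quotient (the quotient by the right multiplication action of `Γ`). -/
structure IsLattice {n : ℕ} (lam : Fin n → ℝ) (Γ : Set (OscG n)) : Prop where
  one_mem : oscOne n ∈ Γ
  mul_mem : ∀ g ∈ Γ, ∀ h ∈ Γ, oscMul lam g h ∈ Γ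
  inv_mem : ∀ g ∈ Γ, oscInv lam g ∈ Γ
  discrete : DiscreteTopology Γ
  cocompact : CompactSpace (Quot (fun g h : OscG n => ∃ γ ∈ Γ, h = oscMul lam g γ))

/-- `Q(X) = 2ad + Σ_k (b_k² + c_k²)/λ_k` for `X = (d,(b₁,c₁,…,bₙ,cₙ),a)` -/
def Qform {n : ℕ} (lam : Fin n → ℝ) (d a : ℝ) (b c : Fin n → ℝ) : ℝ :=
  2 * a * d + ∑ k, (b k ^ 2 + c k ^ 2) / lam k

/-- the geodesic through the identity with initial velocity
`X = (d,(b₁,c₁,…,bₙ,cₙ),a)` for the bi-invariant Lorentzian metric on the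
oscillator group. -/
def geo {n : ℕ} (lam : Fin n → ℝ) (d : ℝ) (b c : Fin n → ℝ) (a : ℝ) (s : ℝ) : OscG n :=
  if a = 0 then (d * s, fun j => (b j * s, c j * s), 0)
  else
    ((d + (1/(2*a)) * ∑ k, (b k ^ 2 + c k ^ 2) / lam k) * s
        - (1/(2*a^2)) * ∑ k, ((b k ^ 2 + c k ^ 2) / (lam k)^2) * Real.sin (lam k * a * s),
     fun j => ((1/(a * lam j)) * (b j * Real.sin (lam j * a * s)
                  + c j * Real.cos (lam j * a * s) - c j),
               (1/(a * lam j)) * (-(b j) * Real.cos (lam j * a * s)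
                  + c j * Real.sin (lam j * a * s) + b j)),
     a * s)

/-- For any lattice `Γ` of `Osc_n(λ₁,…,λₙ)` there is a closed spacelike geodesic
in the quotient. -/
-- block lemmas
lemma rot_zero (p : ℝ × ℝ) : rot 0 p = p := by simp [rot]

lemma rot_rot (θ φ : ℝ) (p : ℝ × ℝ) : rot θ (rot φ p) = rot (θ + φ) p := by
  simp only [rot, Real.cos_add, Real.sin_add, Prod.mk.injEq]
  constructor <;> ring

lemma rot_addv (θ : ℝ) (p q : ℝ × ℝ) : rot θ (p + q) = rot θ p + rot θ q := by
  simp only [rot, Prod.fst_add, Prod.snd_add, Prod.mk_add_mk, Prod.mk.injEq]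
  constructor <;> ring

lemma rot_negv (θ : ℝ) (p : ℝ × ℝ) : rot θ (-p) = -(rot θ p) := by
  simp only [rot, Prod.fst_neg, Prod.snd_neg, Prod.neg_mk, Prod.mk.injEq]
  constructor <;> ring

lemma dot2_Jpair_rot (θ : ℝ) (p q : ℝ × ℝ) :
    dot2 (rot θ p) (Jpair (rot θ q)) = dot2 p (Jpair q) := by
  simp only [rot, dot2, Jpair]
  linear_combination (p.1 * q.2 - p.2 * q.1) * (Real.sin_sq_add_cos_sq θ)

lemma dot2_Jpair_self (p : ℝ × ℝ) : dot2 p (Jpair p) = 0 := by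
  simp [dot2, Jpair]; ring

lemma dot2_Jpair_addr (p q q' : ℝ × ℝ) :
    dot2 p (Jpair (q + q')) = dot2 p (Jpair q) + dot2 p (Jpair q') := by
  simp [dot2, Jpair]; ring

lemma dot2_addl (p p' q : ℝ × ℝ) : dot2 (p + p') q = dot2 p q + dot2 p' q := by
  simp [dot2]; ring

lemma dot2_Jpair_negr (p q : ℝ × ℝ) : dot2 p (Jpair (-q)) = -dot2 p (Jpair q) := by
  simp [dot2, Jpair]; ring

lemma dot2_negl (p q : ℝ × ℝ) : dot2 (-p) q = -dot2 p q := by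
  simp [dot2]; ring

def nsq (p : ℝ × ℝ) : ℝ := p.1 ^ 2 + p.2 ^ 2

lemma nsq_nonneg (p : ℝ × ℝ) : 0 ≤ nsq p := by simp only [nsq]; positivity

lemma nsq_rot (θ : ℝ) (p : ℝ × ℝ) : nsq (rot θ p) = nsq p := by
  simp only [nsq, rot]
  linear_combination (p.1 ^ 2 + p.2 ^ 2) * (Real.sin_sq_add_cos_sq θ)

lemma nsq_sub_rot (θ : ℝ) (p : ℝ × ℝ) :
    nsq (p - rot θ p) = (2 - 2 * Real.cos θ) * nsq p := by
  simp only [nsq, rot, Prod.fst_sub, Prod.snd_sub]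
  linear_combination (p.1 ^ 2 + p.2 ^ 2) * (Real.sin_sq_add_cos_sq θ)

lemma nsq_sub_le (p q : ℝ × ℝ) : nsq (p - q) ≤ 2 * nsq p + 2 * nsq q := by
  simp only [nsq, Prod.fst_sub, Prod.snd_sub]
  nlinarith [sq_nonneg (p.1 + q.1), sq_nonneg (p.2 + q.2)]

lemma nsq_pos_of_ne {p : ℝ × ℝ} (h : p ≠ (0, 0)) : 0 < nsq p := by
  rcases lt_or_eq_of_le (nsq_nonneg p) with h' | h'
  · exact h'
  · exfalso; apply h
    have h1 : p.1 ^ 2 + p.2 ^ 2 = 0 := by simpa [nsq] using h'.symm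
    have : p.1 = 0 ∧ p.2 = 0 := by constructor <;> nlinarith [sq_nonneg p.1, sq_nonneg p.2]
    exact Prod.ext this.1 this.2

section Group
variable {n : ℕ} (lam : Fin n → ℝ)

lemma oscMul_t (g h : OscG n) : (oscMul lam g h).2.2 = g.2.2 + h.2.2 := rfl

lemma oscMul_v (g h : OscG n) (i : Fin n) :
    (oscMul lam g h).2.1 i = g.2.1 i + rot (lam i * g.2.2) (h.2.1 i) := rfl

lemma oscMul_z (g h : OscG n) :
    (oscMul lam g h).1
      = g.1 + h.1 + (1/2) * ∑ i, dot2 (g.2.1 i) (Jpair (rot (lam i * g.2.2) (h.2.1 i))) := rfl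

lemma oscInv_t (g : OscG n) : (oscInv lam g).2.2 = -g.2.2 := rfl
lemma oscInv_v (g : OscG n) (i : Fin n) :
    (oscInv lam g).2.1 i = -(rot (lam i * (-g.2.2)) (g.2.1 i)) := rfl

lemma oscMul_assoc (g h k : OscG n) :
    oscMul lam (oscMul lam g h) k = oscMul lam g (oscMul lam h k) := by
  refine Prod.ext ?_ (Prod.ext (funext fun i => ?_) ?_)
  · simp only [oscMul]
    have hsum : ∀ i : Fin n,
        dot2 (g.2.1 i) (Jpair (rot (lam i * g.2.2) (h.2.1 i)))
          + dot2 (g.2.1 i + rot (lam i * g.2.2) (h.2.1 i))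
              (Jpair (rot (lam i * (g.2.2 + h.2.2)) (k.2.1 i)))
        = dot2 (h.2.1 i) (Jpair (rot (lam i * h.2.2) (k.2.1 i)))
          + dot2 (g.2.1 i)
              (Jpair (rot (lam i * g.2.2) (h.2.1 i + rot (lam i * h.2.2) (k.2.1 i)))) := by
      intro i
      have hang : lam i * (g.2.2 + h.2.2) = lam i * g.2.2 + lam i * h.2.2 := by ring
      rw [hang, ← rot_rot (lam i * g.2.2) (lam i * h.2.2) (k.2.1 i),
        rot_addv, dot2_Jpair_addr, dot2_addl, dot2_Jpair_rot]
      ring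
    have : ∑ i, dot2 (g.2.1 i) (Jpair (rot (lam i * g.2.2) (h.2.1 i)))
          + ∑ i, dot2 (g.2.1 i + rot (lam i * g.2.2) (h.2.1 i))
              (Jpair (rot (lam i * (g.2.2 + h.2.2)) (k.2.1 i)))
        = ∑ i, dot2 (h.2.1 i) (Jpair (rot (lam i * h.2.2) (k.2.1 i)))
          + ∑ i, dot2 (g.2.1 i)
              (Jpair (rot (lam i * g.2.2) (h.2.1 i + rot (lam i * h.2.2) (k.2.1 i)))) := by
      rw [← Finset.sum_add_distrib, ← Finset.sum_add_distrib]
      exact Finset.sum_congr rfl fun i _ => hsum i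
    linarith
  · simp only [oscMul]
    have hang : lam i * (g.2.2 + h.2.2) = lam i * g.2.2 + lam i * h.2.2 := by ring
    rw [rot_addv, hang, ← rot_rot, add_assoc]
  · simp only [oscMul]; ring

lemma oscMul_oscOne (g : OscG n) : oscMul lam g (oscOne n) = g := by
  refine Prod.ext ?_ (Prod.ext (funext fun i => ?_) ?_)
  · simp [oscMul, oscOne, rot, dot2, Jpair]
  · simp [oscMul, oscOne, rot, Prod.ext_iff]
  · simp [oscMul, oscOne]

lemma oscOne_oscMul (g : OscG n) : oscMul lam (oscOne n) g = g := by
  refine Prod.ext ?_ (Prod.ext (funext fun i => ?_) ?_)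
  · simp [oscMul, oscOne, dot2, Jpair]
  · simp [oscMul, oscOne, rot, Prod.ext_iff]
  · simp [oscMul, oscOne]

lemma oscMul_oscInv (g : OscG n) : oscMul lam g (oscInv lam g) = oscOne n := by
  refine Prod.ext ?_ (Prod.ext (funext fun i => ?_) ?_)
  · simp only [oscMul, oscInv, oscOne]
    have : ∀ i : Fin n,
        dot2 (g.2.1 i) (Jpair (rot (lam i * g.2.2) (-(rot (lam i * -g.2.2) (g.2.1 i))))) = 0 := by
      intro i
      rw [rot_negv, rot_rot, dot2_Jpair_negr]
      have : lam i * g.2.2 + lam i * -g.2.2 = 0 := by ring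
      rw [this, rot_zero, dot2_Jpair_self, neg_zero]
    rw [Finset.sum_congr rfl fun i _ => this i]
    simp
  · simp only [oscMul, oscInv, oscOne]
    rw [rot_negv, rot_rot]
    have : lam i * g.2.2 + lam i * -g.2.2 = 0 := by ring
    rw [this, rot_zero]; simp
    rfl
  · simp [oscMul, oscInv, oscOne]

lemma oscInv_oscMul (g : OscG n) : oscMul lam (oscInv lam g) g = oscOne n := by
  refine Prod.ext ?_ (Prod.ext (funext fun i => ?_) ?_)
  · simp only [oscMul, oscInv, oscOne]
    have : ∀ i : Fin n,
        dot2 (-(rot (lam i * -g.2.2) (g.2.1 i)))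
          (Jpair (rot (lam i * -g.2.2) (g.2.1 i))) = 0 := by
      intro i
      rw [dot2_negl, dot2_Jpair_self, neg_zero]
    rw [Finset.sum_congr rfl fun i _ => this i]
    simp
  · simp only [oscMul, oscInv, oscOne]
    simp
    rfl
  · simp [oscMul, oscInv, oscOne]

lemma oscMul_cancel_right (g c : OscG n) :
    oscMul lam (oscMul lam g c) (oscInv lam c) = g := by
  rw [oscMul_assoc, oscMul_oscInv, oscMul_oscOne]

lemma oscMul_cancel_left (u γ : OscG n) :
    oscMul lam (oscInv lam u) (oscMul lam u γ) = γ := by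
  rw [← oscMul_assoc, oscInv_oscMul, oscOne_oscMul]

end Group

section Cont
variable {n : ℕ} (lam : Fin n → ℝ)

lemma continuous_oscMul_right (γ : OscG n) :
    Continuous (fun g : OscG n => oscMul lam g γ) := by
  unfold oscMul rot dot2 Jpair
  fun_prop

end Cont


section Synd
variable {n : ℕ} (lam : Fin n → ℝ) (Γ : Set (OscG n))

lemma osc_r_equiv (h1 : oscOne n ∈ Γ)
    (hm : ∀ g ∈ Γ, ∀ h ∈ Γ, oscMul lam g h ∈ Γ) (hi : ∀ g ∈ Γ, oscInv lam g ∈ Γ) :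
    Equivalence (fun g h : OscG n => ∃ γ ∈ Γ, h = oscMul lam g γ) := by
  constructor
  · intro g; exact ⟨oscOne n, h1, (oscMul_oscOne lam g).symm⟩
  · rintro g h ⟨γ, hγ, rfl⟩
    exact ⟨oscInv lam γ, hi γ hγ, (oscMul_cancel_right lam g γ).symm⟩
  · rintro g h k ⟨γ, hγ, rfl⟩ ⟨δ, hδ, rfl⟩
    exact ⟨oscMul lam γ δ, hm γ hγ δ hδ, oscMul_assoc lam g γ δ⟩

lemma rot_coord_bound (θ : ℝ) (p : ℝ × ℝ) (C : ℝ) (h1 : |p.1| ≤ C) (h2 : |p.2| ≤ C) :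
    |(rot θ p).1| ≤ 2 * C ∧ |(rot θ p).2| ≤ 2 * C := by
  have hc : |Real.cos θ| ≤ 1 := Real.abs_cos_le_one θ
  have hs : |Real.sin θ| ≤ 1 := Real.abs_sin_le_one θ
  constructor
  · calc |(rot θ p).1| = |Real.cos θ * p.1 - Real.sin θ * p.2| := rfl
      _ ≤ |Real.cos θ * p.1| + |Real.sin θ * p.2| := abs_sub _ _
      _ = |Real.cos θ| * |p.1| + |Real.sin θ| * |p.2| := by rw [abs_mul, abs_mul]
      _ ≤ 1 * C + 1 * C := by
          have e1 := mul_le_mul hc h1 (abs_nonneg p.1) zero_le_one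
          have e2 := mul_le_mul hs h2 (abs_nonneg p.2) zero_le_one
          linarith
      _ = 2 * C := by ring
  · calc |(rot θ p).2| = |Real.sin θ * p.1 + Real.cos θ * p.2| := rfl
      _ ≤ |Real.sin θ * p.1| + |Real.cos θ * p.2| := abs_add_le _ _
      _ = |Real.sin θ| * |p.1| + |Real.cos θ| * |p.2| := by rw [abs_mul, abs_mul]
      _ ≤ 1 * C + 1 * C := by
          have e1 := mul_le_mul hs h1 (abs_nonneg p.1) zero_le_one
          have e2 := mul_le_mul hc h2 (abs_nonneg p.2) zero_le_one
          linarith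
      _ = 2 * C := by ring

lemma syndetic (hΓ : IsLattice lam Γ) :
    ∃ M : ℝ, 0 < M ∧ ∀ g : OscG n, ∃ γ ∈ Γ, ∃ w : OscG n,
      γ = oscMul lam w g ∧ |w.1| ≤ M ∧ |w.2.2| ≤ M ∧
      ∀ i, |(w.2.1 i).1| ≤ M ∧ |(w.2.1 i).2| ≤ M := by
  set r := fun g h : OscG n => ∃ γ ∈ Γ, h = oscMul lam g γ with hr
  have hequiv : Equivalence r := osc_r_equiv lam Γ hΓ.one_mem hΓ.mul_mem hΓ.inv_mem
  have hcompact : CompactSpace (Quot r) := hΓ.cocompact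
  have hopen : ∀ U : Set (OscG n), IsOpen U → IsOpen (Quot.mk r '' U) := by
    intro U hU
    rw [← (isQuotientMap_quot_mk (r := r)).isOpen_preimage]
    have hset : Quot.mk r ⁻¹' (Quot.mk r '' U)
        = ⋃ γ ∈ Γ, (fun h : OscG n => oscMul lam h (oscInv lam γ)) ⁻¹' U := by
      ext h
      simp only [Set.mem_preimage, Set.mem_image, Set.mem_iUnion]
      constructor
      · rintro ⟨u, hu, huh⟩
        have hruh : r u h := (hequiv.eqvGen_iff).mp (Quot.eqvGen_exact huh)
        rcases hruh with ⟨γ, hγ, rfl⟩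
        exact ⟨γ, ⟨hγ, by rwa [oscMul_cancel_right]⟩⟩
      · rintro ⟨γ, hγ, hu⟩
        refine ⟨oscMul lam h (oscInv lam γ), hu, Quot.sound ⟨γ, hγ, ?_⟩⟩
        rw [oscMul_assoc, oscInv_oscMul, oscMul_oscOne]
    rw [hset]
    exact isOpen_biUnion fun γ _ => hU.preimage (continuous_oscMul_right lam (oscInv lam γ))
  obtain ⟨t, ht⟩ := isCompact_univ.elim_finite_subcover
      (fun m : ℕ => Quot.mk r '' Metric.ball (0 : OscG n) (m + 1))
      (fun m => hopen _ Metric.isOpen_ball)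
      (by
        intro q _
        induction q using Quot.ind with
        | _ g =>
          obtain ⟨m, hm⟩ := exists_nat_gt (dist g (0 : OscG n))
          exact Set.mem_iUnion.mpr ⟨m, ⟨g, by
            simp only [Metric.mem_ball]
            push_cast
            linarith, rfl⟩⟩)
  set M : ℝ := (t.sup id : ℕ) + 1 with hM
  have hMpos : (0 : ℝ) < M := by positivity
  refine ⟨2 * M, by positivity, fun g => ?_⟩
  have hg : Quot.mk r g ∈ ⋃ m ∈ t, Quot.mk r '' Metric.ball (0 : OscG n) (m + 1) :=
    ht (Set.mem_univ _)
  rcases Set.mem_iUnion₂.mp hg with ⟨m, hmt, u, hu, hqu⟩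
  have hub : ‖u‖ ≤ M := by
    have h1 : dist u (0 : OscG n) < m + 1 := Metric.mem_ball.mp hu
    have h2 : (m : ℝ) ≤ (t.sup id : ℕ) := by exact_mod_cast Finset.le_sup (f := id) hmt
    rw [dist_zero_right] at h1
    rw [hM]; linarith
  have hru : r u g := (hequiv.eqvGen_iff).mp (Quot.eqvGen_exact hqu)
  rcases hru with ⟨γ, hγ, hgu⟩
  have hu1 : |u.1| ≤ M := by
    have h := norm_fst_le u
    rw [Real.norm_eq_abs] at h
    exact h.trans hub
  have hu3 : |u.2.2| ≤ M := by
    have h := (norm_snd_le u.2).trans (norm_snd_le u)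
    rw [Real.norm_eq_abs] at h
    exact h.trans hub
  have hu2 : ∀ i, |(u.2.1 i).1| ≤ M ∧ |(u.2.1 i).2| ≤ M := by
    intro i
    have h := ((norm_le_pi_norm u.2.1 i).trans (norm_fst_le u.2)).trans (norm_snd_le u)
    constructor
    · have h1 := (norm_fst_le (u.2.1 i)).trans h
      rw [Real.norm_eq_abs] at h1
      exact h1.trans hub
    · have h1 := (norm_snd_le (u.2.1 i)).trans h
      rw [Real.norm_eq_abs] at h1
      exact h1.trans hub
  refine ⟨γ, hγ, oscInv lam u, ?_, ?_, ?_, ?_⟩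
  · rw [hgu, oscMul_cancel_left]
  · show |(-u.1 : ℝ)| ≤ 2 * M
    rw [abs_neg]
    linarith
  · show |(-u.2.2 : ℝ)| ≤ 2 * M
    rw [abs_neg]
    linarith
  · intro i
    show |(-(rot (lam i * -u.2.2) (u.2.1 i))).1| ≤ 2 * M ∧
      |(-(rot (lam i * -u.2.2) (u.2.1 i))).2| ≤ 2 * M
    have hb := rot_coord_bound (lam i * -u.2.2) (u.2.1 i) M (hu2 i).1 (hu2 i).2
    constructor
    · rw [Prod.fst_neg, abs_neg]; exact hb.1
    · rw [Prod.snd_neg, abs_neg]; exact hb.2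

end Synd

section Heis
variable {n : ℕ}

def Tsub (lam : Fin n → ℝ) (Γ : Set (OscG n)) (hΓ : IsLattice lam Γ) : AddSubgroup ℝ where
  carrier := {x | ∃ γ ∈ Γ, γ.2.2 = x}
  zero_mem' := ⟨oscOne n, hΓ.one_mem, rfl⟩
  add_mem' := by
    rintro x y ⟨γ, hγ, rfl⟩ ⟨δ, hδ, rfl⟩
    exact ⟨oscMul lam γ δ, hΓ.mul_mem γ hγ δ hδ, rfl⟩
  neg_mem' := by
    rintro x ⟨γ, hγ, rfl⟩
    exact ⟨oscInv lam γ, hΓ.inv_mem γ hγ, rfl⟩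

lemma mem_Tsub {lam : Fin n → ℝ} {Γ : Set (OscG n)} {hΓ : IsLattice lam Γ} {x : ℝ} :
    x ∈ Tsub lam Γ hΓ ↔ ∃ γ ∈ Γ, γ.2.2 = x := Iff.rfl

lemma rot_sub_rot (θ x y : ℝ) :
    rot θ (x, 0) - rot θ (y, 0) = rot θ (x - y, 0) := by
  simp only [rot, Prod.mk_sub_mk, Prod.mk.injEq]
  constructor <;> ring

lemma nsq_coord_le {p : ℝ × ℝ} {M : ℝ} (h1 : |p.1| ≤ M) (h2 : |p.2| ≤ M) :
    nsq p ≤ 2 * M ^ 2 := by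
  rcases abs_le.mp h1 with ⟨a1, a2⟩
  rcases abs_le.mp h2 with ⟨b1, b2⟩
  simp only [nsq]
  nlinarith

lemma exists_heis (lam : Fin n → ℝ) (hlam : ∀ i, 0 < lam i) (Γ : Set (OscG n))
    (hΓ : IsLattice lam Γ) (hn : 0 < n) :
    ∃ γ ∈ Γ, γ.2.2 = 0 ∧ ∃ j, γ.2.1 j ≠ ((0 : ℝ), (0 : ℝ)) := by
  by_contra hcon
  push_neg at hcon
  obtain ⟨M, hM, hsyn⟩ := syndetic lam Γ hΓ
  set j₀ : Fin n := ⟨0, hn⟩ with hj₀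
  -- the commutator relation, valid for all g h ∈ Γ
  have comm_rel : ∀ g ∈ Γ, ∀ h ∈ Γ,
      g.2.1 j₀ - rot (lam j₀ * h.2.2) (g.2.1 j₀)
        = h.2.1 j₀ - rot (lam j₀ * g.2.2) (h.2.1 j₀) := by
    intro g hg h hh
    set c := oscMul lam (oscMul lam (oscMul lam g h) (oscInv lam g)) (oscInv lam h) with hc
    have hcΓ : c ∈ Γ :=
      hΓ.mul_mem _ (hΓ.mul_mem _ (hΓ.mul_mem g hg h hh) _ (hΓ.inv_mem g hg)) _
        (hΓ.inv_mem h hh)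
    have hct : c.2.2 = 0 := by
      show ((g.2.2 + h.2.2) + -g.2.2) + -h.2.2 = 0
      ring
    have hcv : c.2.1 j₀ = (0, 0) := hcon c hcΓ hct j₀
    have e1 : lam j₀ * (g.2.2 + h.2.2) + lam j₀ * -g.2.2 = lam j₀ * h.2.2 := by ring
    have e2 : lam j₀ * (g.2.2 + h.2.2 + -g.2.2) + lam j₀ * -h.2.2 = 0 := by ring
    have hexp : c.2.1 j₀ = g.2.1 j₀ + rot (lam j₀ * g.2.2) (h.2.1 j₀)
        - rot (lam j₀ * h.2.2) (g.2.1 j₀) - h.2.1 j₀ := by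
      show (g.2.1 j₀ + rot (lam j₀ * g.2.2) (h.2.1 j₀))
            + rot (lam j₀ * (g.2.2 + h.2.2)) (-(rot (lam j₀ * -g.2.2) (g.2.1 j₀)))
            + rot (lam j₀ * (g.2.2 + h.2.2 + -g.2.2)) (-(rot (lam j₀ * -h.2.2) (h.2.1 j₀)))
          = _
      rw [rot_negv, rot_negv, rot_rot, rot_rot, e1, e2, rot_zero]
      abel
    have h2 : g.2.1 j₀ + rot (lam j₀ * g.2.2) (h.2.1 j₀)
        - rot (lam j₀ * h.2.2) (g.2.1 j₀) - h.2.1 j₀ = 0 := by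
      rw [← hexp, hcv]
      exact Prod.mk_zero_zero
    have h3 : (g.2.1 j₀ - rot (lam j₀ * h.2.2) (g.2.1 j₀))
        - (h.2.1 j₀ - rot (lam j₀ * g.2.2) (h.2.1 j₀)) = 0 := by
      rw [← h2]; abel
    exact sub_eq_zero.mp h3
  rcases AddSubgroup.dense_or_cyclic (Tsub lam Γ hΓ) with hdense | ⟨a, ha⟩
  · -- dense case
    have hlj := hlam j₀
    have hne : (Set.Ioo (π / (2 * lam j₀)) (π / lam j₀)).Nonempty := by
      apply Set.nonempty_Ioo.mpr
      rw [div_lt_div_iff₀ (by positivity) (by positivity)]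
      nlinarith [Real.pi_pos]
    obtain ⟨θ₀, hθT, hθIoo⟩ := hdense.exists_mem_open isOpen_Ioo hne
    obtain ⟨h₀, hh₀Γ, hh₀t⟩ := hθT
    have hcos : Real.cos (lam j₀ * h₀.2.2) ≤ 0 := by
      rw [hh₀t]
      apply Real.cos_nonpos_of_pi_div_two_le_of_le
      · have h1 : π / (2 * lam j₀) < θ₀ := hθIoo.1
        rw [div_lt_iff₀ (by positivity)] at h1
        nlinarith
      · have h2 : θ₀ < π / lam j₀ := hθIoo.2
        rw [lt_div_iff₀ (by positivity)] at h2
        nlinarith [Real.pi_pos]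
    set B := nsq (h₀.2.1 j₀) with hB
    have hB0 : 0 ≤ B := nsq_nonneg _
    have key : ∀ g ∈ Γ, nsq (g.2.1 j₀) ≤ 2 * B := by
      intro g hg
      have hrel := comm_rel g hg h₀ hh₀Γ
      have hL : nsq (g.2.1 j₀ - rot (lam j₀ * h₀.2.2) (g.2.1 j₀))
          = (2 - 2 * Real.cos (lam j₀ * h₀.2.2)) * nsq (g.2.1 j₀) := nsq_sub_rot _ _
      have hR : nsq (h₀.2.1 j₀ - rot (lam j₀ * g.2.2) (h₀.2.1 j₀))
          = (2 - 2 * Real.cos (lam j₀ * g.2.2)) * nsq (h₀.2.1 j₀) := nsq_sub_rot _ _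
      rw [hrel, hR] at hL
      have hc2 : -1 ≤ Real.cos (lam j₀ * g.2.2) := Real.neg_one_le_cos _
      nlinarith [nsq_nonneg (g.2.1 j₀), nsq_nonneg (h₀.2.1 j₀)]
    -- contradiction with a large element
    set D : ℝ := 4 * B + 4 * M ^ 2 with hD
    have hD0 : 0 ≤ D := by positivity
    set C : ℝ := Real.sqrt D + 1 with hCdef
    obtain ⟨γ, hγΓ, w, hγ, hw1, hw3, hw2⟩ :=
      hsyn (0, (fun i => if i = j₀ then (C, 0) else (0, 0)), 0)
    have hv : γ.2.1 j₀ = w.2.1 j₀ + rot (lam j₀ * w.2.2) (C, 0) := by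
      rw [hγ]
      show w.2.1 j₀ + rot (lam j₀ * w.2.2) (if j₀ = j₀ then (C, 0) else (0, 0)) = _
      rw [if_pos rfl]
    have hrotC : rot (lam j₀ * w.2.2) (C, 0) = γ.2.1 j₀ - w.2.1 j₀ := by
      rw [hv]; abel
    have hCsq : C ^ 2 = nsq (γ.2.1 j₀ - w.2.1 j₀) := by
      rw [← hrotC, nsq_rot]
      simp [nsq]
    have hbound : nsq (γ.2.1 j₀ - w.2.1 j₀) ≤ 2 * (2 * B) + 2 * (2 * M ^ 2) := by
      have b1 := nsq_sub_le (γ.2.1 j₀) (w.2.1 j₀)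
      have b2 := key γ hγΓ
      have b3 := nsq_coord_le (hw2 j₀).1 (hw2 j₀).2
      linarith
    have hsq : Real.sqrt D ^ 2 = D := Real.sq_sqrt hD0
    have hsqrt0 : 0 ≤ Real.sqrt D := Real.sqrt_nonneg D
    have : C ^ 2 ≤ D := by rw [hCsq]; rw [hD]; linarith
    nlinarith
  · -- cyclic case
    have H := fun ρ : ℕ =>
      hsyn (0, (fun i => if i = j₀ then ((ρ : ℝ), 0) else (0, 0)), 0)
    choose γf hmem wf heq hb1 hb3 hb2 using H
    have htf : ∀ ρ, (γf ρ).2.2 = (wf ρ).2.2 := by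
      intro ρ
      rw [heq ρ]
      show (wf ρ).2.2 + 0 = _
      ring
    have htub : ∀ ρ, |(γf ρ).2.2| ≤ M := by
      intro ρ; rw [htf]; exact hb3 ρ
    have hmemT : ∀ ρ, ∃ m : ℤ, m • a = (γf ρ).2.2 := by
      intro ρ
      have : (γf ρ).2.2 ∈ Tsub lam Γ hΓ := ⟨γf ρ, hmem ρ, rfl⟩
      rw [ha] at this
      exact (AddSubgroup.mem_closure_singleton).mp this
    choose mf hmf using hmemT
    -- find ρ < ρ' with equal t-values and large gap
    have main : ∃ ρ ρ' : ℕ, (γf ρ).2.2 = (γf ρ').2.2 ∧ 3 * M < (ρ' : ℝ) - (ρ : ℝ) := by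
      by_cases hA : a = 0
      · refine ⟨0, ⌈3 * M⌉₊ + 1, ?_, ?_⟩
        · rw [← hmf 0, ← hmf (⌈3 * M⌉₊ + 1), hA]
          simp
        · push_cast
          have := Nat.le_ceil (3 * M)
          linarith
      · set K : ℤ := ⌈M / |a|⌉ with hK
        have habs : (0 : ℝ) < |a| := abs_pos.mpr hA
        have hmbound : ∀ ρ, mf ρ ∈ Set.Icc (-K) K := by
          intro ρ
          have h1 : |(mf ρ : ℝ) * a| ≤ M := by
            rw [← zsmul_eq_mul, hmf ρ]; exact htub ρ
          rw [abs_mul] at h1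
          have h2 : |(mf ρ : ℝ)| ≤ M / |a| := by
            rw [le_div_iff₀ habs]; exact h1
          have h3 : |(mf ρ : ℝ)| ≤ (K : ℝ) := h2.trans (Int.le_ceil _)
          rw [← Int.cast_abs] at h3
          have h4 : |mf ρ| ≤ K := by exact_mod_cast h3
          exact Set.mem_Icc.mpr (abs_le.mp h4)
        haveI : Finite ↥(Set.Icc (-K) K) := (Set.finite_Icc (-K) K).to_subtype
        obtain ⟨y, hy⟩ := Finite.exists_infinite_fiber
          (fun ρ : ℕ => (⟨mf ρ, hmbound ρ⟩ : ↥(Set.Icc (-K) K)))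
        have hyinf : ((fun ρ : ℕ => (⟨mf ρ, hmbound ρ⟩ : ↥(Set.Icc (-K) K))) ⁻¹' {y}).Infinite :=
          Set.infinite_coe_iff.mp hy
        obtain ⟨ρ, hρ⟩ := hyinf.nonempty
        obtain ⟨ρ', hρ', hlt⟩ := hyinf.exists_gt (ρ + ⌈3 * M⌉₊)
        refine ⟨ρ, ρ', ?_, ?_⟩
        · have h1 : mf ρ = mf ρ' := by
            have e1 : (⟨mf ρ, hmbound ρ⟩ : ↥(Set.Icc (-K) K)) = y := hρ
            have e2 : (⟨mf ρ', hmbound ρ'⟩ : ↥(Set.Icc (-K) K)) = y := hρ'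
            have := e1.trans e2.symm
            exact Subtype.mk_eq_mk.mp this
          rw [← hmf ρ, ← hmf ρ', h1]
        · have h2 : (ρ : ℝ) + ⌈3 * M⌉₊ < ρ' := by exact_mod_cast hlt
          have := Nat.le_ceil (3 * M)
          linarith
    obtain ⟨ρ, ρ', hteq, hgap⟩ := main
    -- form the quotient element
    set δ := oscMul lam (γf ρ') (oscInv lam (γf ρ)) with hδ
    have hδΓ : δ ∈ Γ := hΓ.mul_mem _ (hmem ρ') _ (hΓ.inv_mem _ (hmem ρ))
    have hδt : δ.2.2 = 0 := by
      show (γf ρ').2.2 + -(γf ρ).2.2 = 0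
      rw [hteq]; ring
    have hδv : δ.2.1 j₀ = (0, 0) := hcon δ hδΓ hδt j₀
    have hδv' : δ.2.1 j₀ = (γf ρ').2.1 j₀ - (γf ρ).2.1 j₀ := by
      show (γf ρ').2.1 j₀
          + rot (lam j₀ * (γf ρ').2.2) (-(rot (lam j₀ * -(γf ρ).2.2) ((γf ρ).2.1 j₀)))
          = _
      rw [rot_negv, rot_rot]
      have e : lam j₀ * (γf ρ').2.2 + lam j₀ * -(γf ρ).2.2 = 0 := by
        rw [hteq]; ring
      rw [e, rot_zero]
      abel
    have hveq : (γf ρ').2.1 j₀ = (γf ρ).2.1 j₀ := by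
      have := hδv' ▸ hδv
      have h0 : (γf ρ').2.1 j₀ - (γf ρ).2.1 j₀ = 0 := by
        rw [this]; exact Prod.mk_zero_zero
      exact sub_eq_zero.mp h0
    -- expand: both have the same rotation angle
    have hvρ : ∀ σ : ℕ, (γf σ).2.1 j₀ = (wf σ).2.1 j₀
        + rot (lam j₀ * (wf σ).2.2) ((σ : ℝ), 0) := by
      intro σ
      rw [heq σ]
      show (wf σ).2.1 j₀ + rot (lam j₀ * (wf σ).2.2) (if j₀ = j₀ then ((σ : ℝ), 0) else (0, 0)) = _
      rw [if_pos rfl]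
    have hangle : (wf ρ').2.2 = (wf ρ).2.2 := by
      rw [← htf, ← htf, hteq]
    have hrot : rot (lam j₀ * (wf ρ).2.2) ((ρ' : ℝ) - (ρ : ℝ), 0)
        = (wf ρ).2.1 j₀ - (wf ρ').2.1 j₀ := by
      rw [← rot_sub_rot]
      have h1 := hvρ ρ
      have h2 := hvρ ρ'
      rw [hangle] at h2
      rw [h2, h1] at hveq
      have : (wf ρ').2.1 j₀ + rot (lam j₀ * (wf ρ).2.2) ((ρ' : ℝ), 0)
          - ((wf ρ).2.1 j₀ + rot (lam j₀ * (wf ρ).2.2) ((ρ : ℝ), 0))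
          = 0 := by rw [hveq]; abel
      have h4 : rot (lam j₀ * (wf ρ).2.2) ((ρ' : ℝ), 0) - rot (lam j₀ * (wf ρ).2.2) ((ρ : ℝ), 0)
          = (wf ρ).2.1 j₀ - (wf ρ').2.1 j₀ := by
        have h5 := this
        abel_nf at h5 ⊢
        linear_combination (norm := abel_nf) h5
      exact h4
    have hnsqL : nsq (rot (lam j₀ * (wf ρ).2.2) ((ρ' : ℝ) - (ρ : ℝ), 0))
        = ((ρ' : ℝ) - (ρ : ℝ)) ^ 2 := by
      rw [nsq_rot]; simp [nsq]
    have hnsqR : nsq ((wf ρ).2.1 j₀ - (wf ρ').2.1 j₀) ≤ 8 * M ^ 2 := by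
      have b1 := nsq_sub_le ((wf ρ).2.1 j₀) ((wf ρ').2.1 j₀)
      have b2 := nsq_coord_le (hb2 ρ j₀).1 (hb2 ρ j₀).2
      have b3 := nsq_coord_le (hb2 ρ' j₀).1 (hb2 ρ' j₀).2
      linarith
    rw [hrot] at hnsqL
    nlinarith [hnsqR, hnsqL, hgap, hM]

end Heis

theorem stmt_3 {n : ℕ} (lam : Fin n → ℝ) (hlam : ∀ i, 0 < lam i)
    (Γ : Set (OscG n)) (hΓ : IsLattice lam Γ) :
    ∃ (d a : ℝ) (b c : Fin n → ℝ),
      Qform lam d a b c > 0 ∧ ∃ s > (0 : ℝ), geo lam d b c a s ∈ Γ := by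
  rcases Nat.eq_zero_or_pos n with hn | hn
  · -- n = 0 case
    subst hn
    obtain ⟨M, hM, hsyn⟩ := syndetic lam Γ hΓ
    obtain ⟨γ, hγΓ, w, hγ, hw1, hw3, hw2⟩ := hsyn (M + 1, (fun i => i.elim0), M + 1)
    have hz : γ.1 = w.1 + (M + 1) := by
      rw [hγ]
      show w.1 + (M + 1) + (1/2) * ∑ i : Fin 0, _ = _
      simp
    have ht : γ.2.2 = w.2.2 + (M + 1) := by rw [hγ]; rfl
    have hzpos : 0 < γ.1 := by
      rcases abs_le.mp hw1 with ⟨h1, _⟩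
      rw [hz]; linarith
    have htpos : 0 < γ.2.2 := by
      rcases abs_le.mp hw3 with ⟨h1, _⟩
      rw [ht]; linarith
    refine ⟨γ.1, γ.2.2, (fun i => 0), (fun i => 0), ?_, 1, one_pos, ?_⟩
    · show 2 * γ.2.2 * γ.1 + ∑ k : Fin 0, _ > 0
      rw [Finset.univ_eq_empty, Finset.sum_empty, add_zero]
      positivity
    · have hne : γ.2.2 ≠ 0 := ne_of_gt htpos
      have : geo lam γ.1 (fun i => 0) (fun i => 0) γ.2.2 1 = γ := by
        rw [geo, if_neg hne]
        refine Prod.ext ?_ (Prod.ext (funext fun j => j.elim0) ?_)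
        · show (γ.1 + (1/(2*γ.2.2)) * ∑ k : Fin 0, _) * 1
            - (1/(2*γ.2.2^2)) * ∑ k : Fin 0, _ = γ.1
          rw [Finset.univ_eq_empty, Finset.sum_empty, Finset.sum_empty]
          ring
        · show γ.2.2 * 1 = γ.2.2
          ring
      rw [this]
      exact hγΓ
  · -- n > 0 case
    obtain ⟨γ, hγΓ, hγt, j, hγj⟩ := exists_heis lam hlam Γ hΓ hn
    refine ⟨γ.1, 0, (fun k => (γ.2.1 k).1), (fun k => (γ.2.1 k).2), ?_, 1, one_pos, ?_⟩
    · show 2 * 0 * γ.1 + ∑ k, ((γ.2.1 k).1 ^ 2 + (γ.2.1 k).2 ^ 2) / lam k > 0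
      rw [mul_zero, zero_mul, zero_add]
      apply Finset.sum_pos'
      · intro k _
        have := nsq_nonneg (γ.2.1 k)
        exact div_nonneg (by simpa [nsq] using this) (hlam k).le
      · refine ⟨j, Finset.mem_univ j, ?_⟩
        have hp := nsq_pos_of_ne hγj
        exact div_pos (by simpa [nsq] using hp) (hlam j)
    · have : geo lam γ.1 (fun k => (γ.2.1 k).1) (fun k => (γ.2.1 k).2) 0 1 = γ := by
        rw [geo, if_pos rfl]
        refine Prod.ext ?_ (Prod.ext (funext fun k => ?_) ?_)
        · show γ.1 * 1 = γ.1
          ring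
        · show ((γ.2.1 k).1 * 1, (γ.2.1 k).2 * 1) = γ.2.1 k
          rw [mul_one, mul_one]
        · exact hγt.symm
      rw [this]
      exact hγΓ
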